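/- If P : E → F is an n-homogeneous continuous polynomial which is almost p-summing at every point of E, then for each a ∈ E the differential dP(a) : E → F (a continuous linear map) is almost p-summing at the origin. -/

import Mathlib

open MeasureTheory Filter Finset

/-- The weak ℓ_q norm of a finite family: `sup_{‖φ‖≤1} (∑ |φ x_j|^q)^{1/q}`. -/
noncomputable def weakNorm {E : Type*} [NormedAddCommGroup E] [NormedSpace ℝ E]
    (q : ℝ) {k : ℕ} (x : Fin k → E) : ℝ :=
  sSup {s : ℝ | ∃ φ : E →L[ℝ] ℝ, ‖φ‖ ≤ 1 ∧ s = (∑ j, |φ (x j)| ^ q) ^ (1 / q)}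

/-- The weak ℓ_q norm of a sequence. -/
noncomputable def weakNormSeq {E : Type*} [NormedAddCommGroup E] [NormedSpace ℝ E]
    (q : ℝ) (x : ℕ → E) : ℝ :=
  sSup {s : ℝ | ∃ φ : E →L[ℝ] ℝ, ‖φ‖ ≤ 1 ∧ s = (∑' j, |φ (x j)| ^ q) ^ (1 / q)}

/-- Unconditionally q-summable sequences: weakly q-summable with weak norms of tails → 0. -/
def UncondSummable {E : Type*} [NormedAddCommGroup E] [NormedSpace ℝ E]
    (q : ℝ) (x : ℕ → E) : Prop :=
  (∀ φ : E →L[ℝ] ℝ, Summable fun j => |φ (x j)| ^ q) ∧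
    Tendsto (fun m => weakNormSeq q fun j => x (j + m)) atTop (nhds 0)

/-- The Rademacher functions on [0,1]. -/
noncomputable def rademacher (j : ℕ) (t : ℝ) : ℝ :=
  if Int.fract ((2 : ℝ) ^ j * t) < 1 / 2 then 1 else -1

/-- `(∫_0^1 ‖∑_j r_j(t) y_j‖² dt)^{1/2}` for a finite family `y` in `F`. -/
noncomputable def radNorm {F : Type*} [NormedAddCommGroup F] [NormedSpace ℝ F]
    {k : ℕ} (y : Fin k → F) : ℝ :=
  (∫ t in (0:ℝ)..1, ‖∑ j : Fin k, rademacher (j : ℕ) t • y j‖ ^ 2) ^ ((1:ℝ) / 2)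

/-- `f` is almost p-summing at `a`. -/
def AlmostSummingAt {E F : Type*} [NormedAddCommGroup E] [NormedSpace ℝ E]
    [NormedAddCommGroup F] [NormedSpace ℝ F] (p : ℝ) (f : E → F) (a : E) : Prop :=
  ∃ C > 0, ∃ ε > 0, ∃ r > 0, ∀ (k : ℕ) (x : Fin k → E), weakNorm p x < ε →
    radNorm (fun j => f (a + x j) - f a) ≤ C * weakNorm p x ^ r

/-- `f` is absolutely (p,q)-summing at `a`. -/
def AbsSummingAt {E F : Type*} [NormedAddCommGroup E] [NormedSpace ℝ E]
    [NormedAddCommGroup F] [NormedSpace ℝ F] (p q : ℝ) (f : E → F) (a : E) : Prop :=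
  ∃ M > 0, ∃ δ > 0, ∃ r > 0, ∀ (k : ℕ) (x : Fin k → E), weakNorm q x < δ →
    (∑ j, ‖f (a + x j) - f a‖ ^ p) ≤ M * weakNorm q x ^ r

section Rad
variable {F : Type*} [NormedAddCommGroup F] [NormedSpace ℝ F] {k : ℕ}

lemma measurable_rademacher (j : ℕ) : Measurable (rademacher j) := by
  unfold rademacher
  exact Measurable.ite
    (measurableSet_lt (measurable_fract.comp (measurable_const.mul measurable_id)) measurable_const)
    measurable_const measurable_const

lemma abs_rademacher (j : ℕ) (t : ℝ) : |rademacher j t| ≤ 1 := by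
  unfold rademacher; split <;> simp

noncomputable def radMu : Measure ℝ := volume.restrict (Set.Ioc (0:ℝ) 1)

instance : IsFiniteMeasure radMu := by
  constructor
  rw [radMu, Measure.restrict_apply_univ, Real.volume_Ioc]
  simp

lemma radSM (y : Fin k → F) :
    StronglyMeasurable (fun t => ∑ j : Fin k, rademacher (j : ℕ) t • y j) := by
  apply Finset.stronglyMeasurable_fun_sum
  intro j _
  exact ((measurable_rademacher j).stronglyMeasurable).smul_const _

lemma radMem (y : Fin k → F) :
    MemLp (fun t => ∑ j : Fin k, rademacher (j : ℕ) t • y j) 2 radMu := by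
  apply MemLp.of_bound ((radSM y).aestronglyMeasurable) (∑ j : Fin k, ‖y j‖)
  filter_upwards with t
  refine (norm_sum_le _ _).trans (Finset.sum_le_sum fun j _ => ?_)
  rw [norm_smul, Real.norm_eq_abs]
  calc |rademacher (j:ℕ) t| * ‖y j‖ ≤ 1 * ‖y j‖ :=
        mul_le_mul_of_nonneg_right (abs_rademacher _ _) (norm_nonneg _)
    _ = ‖y j‖ := one_mul _

lemma radNorm_eq (y : Fin k → F) :
    radNorm y = (eLpNorm (fun t => ∑ j : Fin k, rademacher (j : ℕ) t • y j) 2 radMu).toReal := by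
  rw [(radMem y).eLpNorm_eq_integral_rpow_norm (by norm_num) (by norm_num)]
  rw [ENNReal.toReal_ofReal (Real.rpow_nonneg (integral_nonneg fun t => by positivity) _)]
  rw [radNorm, intervalIntegral.integral_of_le zero_le_one]
  norm_num [radMu]

lemma radNorm_nonneg (y : Fin k → F) : 0 ≤ radNorm y := by
  apply Real.rpow_nonneg
  rw [intervalIntegral.integral_of_le zero_le_one]
  exact integral_nonneg fun t => by positivity

lemma radNorm_zero : radNorm (fun _ : Fin k => (0:F)) = 0 := by
  simp [radNorm, Real.zero_rpow (by norm_num : (1:ℝ)/2 ≠ 0)]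

lemma radNorm_add_le (y z : Fin k → F) :
    radNorm (fun j => y j + z j) ≤ radNorm y + radNorm z := by
  rw [radNorm_eq, radNorm_eq, radNorm_eq]
  have h : (fun t => ∑ j : Fin k, rademacher (j:ℕ) t • (y j + z j)) =
      (fun t => ∑ j : Fin k, rademacher (j:ℕ) t • y j) +
      (fun t => ∑ j : Fin k, rademacher (j:ℕ) t • z j) := by
    funext t; simp [smul_add, Finset.sum_add_distrib]
  rw [h]
  have h1 := eLpNorm_add_le (radMem y).aestronglyMeasurable (radMem z).aestronglyMeasurable
    (by norm_num : (1:ENNReal) ≤ 2)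
  refine (ENNReal.toReal_mono ?_ h1).trans_eq
    (ENNReal.toReal_add (radMem y).eLpNorm_ne_top (radMem z).eLpNorm_ne_top)
  exact ENNReal.add_ne_top.2 ⟨(radMem y).eLpNorm_ne_top, (radMem z).eLpNorm_ne_top⟩

lemma radNorm_smul_le (c : ℝ) (y : Fin k → F) :
    radNorm (fun j => c • y j) ≤ |c| * radNorm y := by
  have h : ∀ t, (∑ j : Fin k, rademacher (j:ℕ) t • c • y j)
      = c • ∑ j : Fin k, rademacher (j:ℕ) t • y j := by
    intro t; rw [Finset.smul_sum]; exact Finset.sum_congr rfl fun j _ => smul_comm _ _ _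
  rw [radNorm, radNorm]
  have h2 : (∫ t in (0:ℝ)..1, ‖∑ j : Fin k, rademacher (j:ℕ) t • c • y j‖ ^ 2)
      = c^2 * ∫ t in (0:ℝ)..1, ‖∑ j : Fin k, rademacher (j:ℕ) t • y j‖ ^ 2 := by
    rw [← intervalIntegral.integral_const_mul]
    apply intervalIntegral.integral_congr
    intro t _
    dsimp only
    rw [h t, norm_smul, Real.norm_eq_abs, mul_pow, sq_abs]
  rw [h2]
  have hI : 0 ≤ ∫ t in (0:ℝ)..1, ‖∑ j : Fin k, rademacher (j:ℕ) t • y j‖ ^ 2 := by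
    rw [intervalIntegral.integral_of_le zero_le_one]
    exact integral_nonneg fun t => by positivity
  rw [Real.mul_rpow (sq_nonneg c) hI]
  apply mul_le_mul_of_nonneg_right _ (Real.rpow_nonneg hI _)
  rw [← sq_abs, ← Real.rpow_natCast |c| 2, ← Real.rpow_mul (abs_nonneg c)]
  norm_num

lemma radNorm_sum_le {ι : Type*} (s : Finset ι) (y : ι → Fin k → F) :
    radNorm (fun j => ∑ m ∈ s, y m j) ≤ ∑ m ∈ s, radNorm (y m) := by
  induction s using Finset.cons_induction with
  | empty => simp [radNorm_zero]
  | cons i s hi ih =>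
    rw [Finset.sum_cons]
    have h1 : (fun j => ∑ m ∈ Finset.cons i s hi, y m j) =
        fun j => y i j + ∑ m ∈ s, y m j := by
      funext j; rw [Finset.sum_cons]
    rw [h1]
    exact (radNorm_add_le _ _).trans (add_le_add_right ih _)

end Rad


section Weak
variable {E : Type*} [NormedAddCommGroup E] [NormedSpace ℝ E] {q : ℝ} {k : ℕ}

lemma weakNorm_set_mem_zero (hq : q ≠ 0) (x : Fin k → E) :
    (0:ℝ) ∈ {s : ℝ | ∃ φ : E →L[ℝ] ℝ, ‖φ‖ ≤ 1 ∧ s = (∑ j, |φ (x j)| ^ q) ^ (1 / q)} := by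
  refine ⟨0, by simp, ?_⟩
  simp [Real.zero_rpow hq]
  rw [Real.zero_rpow (by simpa using hq : q⁻¹ ≠ 0)]

lemma weakNorm_bddAbove (hq : 0 < q) (x : Fin k → E) :
    BddAbove {s : ℝ | ∃ φ : E →L[ℝ] ℝ, ‖φ‖ ≤ 1 ∧ s = (∑ j, |φ (x j)| ^ q) ^ (1 / q)} := by
  refine ⟨(∑ j, ‖x j‖ ^ q) ^ (1 / q), ?_⟩
  rintro s ⟨φ, hφ, rfl⟩
  apply Real.rpow_le_rpow (Finset.sum_nonneg fun j _ => Real.rpow_nonneg (abs_nonneg _) _)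
    _ (by positivity)
  apply Finset.sum_le_sum
  intro j _
  apply Real.rpow_le_rpow (abs_nonneg _) _ hq.le
  calc |φ (x j)| = ‖φ (x j)‖ := (Real.norm_eq_abs _).symm
    _ ≤ ‖φ‖ * ‖x j‖ := φ.le_opNorm _
    _ ≤ 1 * ‖x j‖ := mul_le_mul_of_nonneg_right hφ (norm_nonneg _)
    _ = ‖x j‖ := one_mul _

lemma weakNorm_nonneg (hq : 0 < q) (x : Fin k → E) : 0 ≤ weakNorm q x :=
  le_csSup (weakNorm_bddAbove hq x) (weakNorm_set_mem_zero hq.ne' x)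

lemma weakNorm_smul_le (hq : 0 < q) {c : ℝ} (hc : 0 ≤ c) (x : Fin k → E) :
    weakNorm q (fun j => c • x j) ≤ c * weakNorm q x := by
  apply csSup_le ⟨0, weakNorm_set_mem_zero hq.ne' _⟩
  rintro s ⟨φ, hφ, rfl⟩
  have h1 : ∀ j : Fin k, |φ (c • x j)| ^ q = c ^ q * |φ (x j)| ^ q := by
    intro j
    rw [_root_.map_smul, smul_eq_mul, abs_mul, abs_of_nonneg hc,
      Real.mul_rpow hc (abs_nonneg _)]
  have hS : 0 ≤ ∑ j, |φ (x j)| ^ q :=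
    Finset.sum_nonneg fun j _ => Real.rpow_nonneg (abs_nonneg _) _
  calc (∑ j, |φ (c • x j)| ^ q) ^ (1/q)
      = (c ^ q * ∑ j, |φ (x j)| ^ q) ^ (1/q) := by
        rw [Finset.mul_sum]; exact congrArg (· ^ (1/q)) (Finset.sum_congr rfl fun j _ => h1 j)
    _ = c * (∑ j, |φ (x j)| ^ q) ^ (1/q) := by
        rw [Real.mul_rpow (Real.rpow_nonneg hc _) hS, ← Real.rpow_mul hc,
          mul_one_div_cancel hq.ne', Real.rpow_one]
    _ ≤ c * weakNorm q x := by
        apply mul_le_mul_of_nonneg_left _ hc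
        exact le_csSup (weakNorm_bddAbove hq x) ⟨φ, hφ, rfl⟩

end Weak

lemma lam_exists (n : ℕ) : ∃ lam : Fin (n+2) → ℝ,
    ∀ k : Fin (n+2), (∑ m, lam m * (m:ℝ) ^ (k:ℕ)) = if (k:ℕ) = 1 then 1 else 0 := by
  classical
  set v : Fin (n+2) → ℝ := fun m => (m:ℝ) with hv
  have hinj : Function.Injective v := by
    intro i j h
    have : ((i:ℕ):ℝ) = ((j:ℕ):ℝ) := h
    exact Fin.ext (Nat.cast_injective this)
  have hdet : (Matrix.vandermonde v).det ≠ 0 :=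
    (Matrix.det_vandermonde_ne_zero_iff).2 hinj
  set A : Matrix (Fin (n+2)) (Fin (n+2)) ℝ := (Matrix.vandermonde v).transpose with hA
  have hdetA : IsUnit A.det := by
    rw [hA, Matrix.det_transpose]; exact isUnit_iff_ne_zero.2 hdet
  set e : Fin (n+2) → ℝ := fun k => if (k:ℕ) = 1 then 1 else 0 with he
  have hex : ∃ lam : Fin (n+2) → ℝ, A.mulVec lam = e := by
    refine ⟨A⁻¹.mulVec e, ?_⟩
    rw [Matrix.mulVec_mulVec, Matrix.mul_nonsing_inv A hdetA, Matrix.one_mulVec]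
  obtain ⟨lam, hlam⟩ := hex
  refine ⟨lam, fun k => ?_⟩
  have h2 := congrFun hlam k
  simp only [Matrix.mulVec, dotProduct, hA, Matrix.transpose_apply,
    Matrix.vandermonde, Matrix.of_apply, he] at h2
  rw [← h2]
  exact Finset.sum_congr rfl fun m _ => mul_comm _ _


section Multi
variable {E F : Type*} [NormedAddCommGroup E] [NormedSpace ℝ E]
    [NormedAddCommGroup F] [NormedSpace ℝ F] {n : ℕ}
    (T : ContinuousMultilinearMap ℝ (fun _ : Fin (n + 1) => E) F)

lemma poly_expand (a x : E) (c : ℝ) :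
    T (fun _ : Fin (n+1) => a + c • x) =
      ∑ s : Finset (Fin (n+1)),
        (c ^ s.card) • T (s.piecewise (fun _ => x) (fun _ => a)) := by
  classical
  have h0 : (fun _ : Fin (n+1) => a + c • x) =
      (fun _ : Fin (n+1) => c • x) + (fun _ : Fin (n+1) => a) := by
    funext i; simp [add_comm]
  rw [h0]
  have h1 := T.toMultilinearMap.map_add_univ (fun _ : Fin (n+1) => c • x) (fun _ => a)
  rw [show (T ((fun _ : Fin (n+1) => c • x) + fun _ => a) : F) =
    T.toMultilinearMap ((fun _ : Fin (n+1) => c • x) + fun _ => a) from rfl, h1]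
  apply Finset.sum_congr rfl
  intro s _
  have h2 : (s.piecewise (fun _ : Fin (n+1) => c • x) (fun _ => a)) =
      s.piecewise (fun i => c • (s.piecewise (fun _ : Fin (n+1) => x) (fun _ => a)) i)
        (s.piecewise (fun _ : Fin (n+1) => x) (fun _ => a)) := by
    funext i
    by_cases hi : i ∈ s <;> simp [Finset.piecewise, hi]
  have h3 := T.toMultilinearMap.map_piecewise_smul (fun _ : Fin (n+1) => c)
    (s.piecewise (fun _ : Fin (n+1) => x) (fun _ => a)) s
  calc T.toMultilinearMap (s.piecewise (fun _ : Fin (n+1) => c • x) (fun _ => a))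
      = T.toMultilinearMap (s.piecewise (fun i => c • (s.piecewise (fun _ : Fin (n+1) => x)
          (fun _ => a)) i) (s.piecewise (fun _ : Fin (n+1) => x) (fun _ => a))) := by rw [← h2]
    _ = (∏ _i ∈ s, c) • T.toMultilinearMap (s.piecewise (fun _ : Fin (n+1) => x) (fun _ => a)) := h3
    _ = (c ^ s.card) • T (s.piecewise (fun _ : Fin (n+1) => x) (fun _ => a)) := by
        rw [Finset.prod_const]; rfl
end Multi

section Key
variable {E F : Type*} [NormedAddCommGroup E] [NormedSpace ℝ E]
    [NormedAddCommGroup F] [NormedSpace ℝ F] {n : ℕ}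
    (T : ContinuousMultilinearMap ℝ (fun _ : Fin (n + 1) => E) F)

lemma key_identity
    (hsym : ∀ (σ : Equiv.Perm (Fin (n + 1))) (v : Fin (n + 1) → E), T (v ∘ σ) = T v)
    (lam : Fin (n+2) → ℝ)
    (hlam : ∀ k : Fin (n+2), (∑ m, lam m * (m:ℝ) ^ (k:ℕ)) = if (k:ℕ) = 1 then 1 else 0)
    (a x : E) :
    ∑ m : Fin (n+2), lam m • (T (fun _ => a + (m:ℝ) • x) - T (fun _ => a))
      = ((n:ℝ)+1) • T (Function.update (fun _ : Fin (n+1) => a) (Fin.last n) x) := by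
  classical
  set B : Finset (Fin (n+1)) → F := fun s => T (s.piecewise (fun _ => x) (fun _ => a)) with hB
  have hB0 : T (fun _ : Fin (n+1) => a) = B ∅ := by
    rw [hB]; simp
  have hstep : ∀ m : Fin (n+2),
      lam m • (T (fun _ => a + (m:ℝ) • x) - T (fun _ => a))
        = (∑ s : Finset (Fin (n+1)), (lam m * (m:ℝ) ^ s.card) • B s) - lam m • B ∅ := by
    intro m
    rw [poly_expand T a x (m:ℝ), hB0, smul_sub, Finset.smul_sum]
    congr 1
    exact Finset.sum_congr rfl fun s _ => smul_smul _ _ _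
  rw [Finset.sum_congr rfl fun m _ => hstep m, Finset.sum_sub_distrib, Finset.sum_comm]
  have hzero : (∑ m : Fin (n+2), lam m • B ∅) = 0 := by
    rw [← Finset.sum_smul]
    have h0 := hlam 0
    simp only [Fin.val_zero, pow_zero, mul_one] at h0
    rw [h0]
    simp
  rw [hzero, sub_zero]
  have hcard : ∀ s : Finset (Fin (n+1)), s.card < n + 2 := by
    intro s
    have := Finset.card_le_univ s
    simp only [Finset.card_univ, Fintype.card_fin] at this
    omega
  have hone : ∀ s : Finset (Fin (n+1)),
      (∑ m : Fin (n+2), (lam m * (m:ℝ) ^ s.card) • B s)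
        = if s.card = 1 then B s else 0 := by
    intro s
    rw [← Finset.sum_smul]
    have := hlam ⟨s.card, hcard s⟩
    simp only at this
    rw [this]
    split <;> simp
  rw [Finset.sum_congr rfl fun s _ => hone s, ← Finset.sum_filter]
  have himg : Finset.univ.filter (fun s : Finset (Fin (n+1)) => s.card = 1)
      = Finset.univ.image (fun i : Fin (n+1) => ({i} : Finset (Fin (n+1)))) := by
    ext s
    simp only [Finset.mem_filter, Finset.mem_univ, true_and, Finset.mem_image,
      Finset.card_eq_one]
    exact ⟨fun ⟨i, h⟩ => ⟨i, h.symm⟩, fun ⟨i, h⟩ => ⟨i, h.symm⟩⟩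
  rw [himg, Finset.sum_image (fun i _ j _ h => Finset.singleton_injective h)]
  have hsingle : ∀ i : Fin (n+1), B {i} = T (Function.update (fun _ => a) (Fin.last n) x) := by
    intro i
    rw [hB]
    simp only [Finset.piecewise_singleton]
    have hcomp : Function.update (fun _ : Fin (n+1) => a) (Fin.last n) x ∘ (Equiv.swap i (Fin.last n))
        = Function.update (fun _ : Fin (n+1) => a) i x := by
      have := Function.update_comp_equiv (fun _ : Fin (n+1) => a) (Equiv.swap i (Fin.last n))
        (Fin.last n) x
      rw [this]
      simp [Equiv.symm_swap, Equiv.swap_apply_right]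
      rfl
    rw [← hcomp, hsym]
  rw [Finset.sum_congr rfl fun i _ => hsingle i, Finset.sum_const, Finset.card_univ,
    Fintype.card_fin]
  rw [← Nat.cast_smul_eq_nsmul ℝ (n+1)]
  push_cast
  ring_nf
end Key


theorem stmt12 {E F : Type*} [NormedAddCommGroup E] [NormedSpace ℝ E]
    [NormedAddCommGroup F] [NormedSpace ℝ F]
    (p : ℝ) (hp : 1 ≤ p) (n : ℕ)
    (T : ContinuousMultilinearMap ℝ (fun _ : Fin (n + 1) => E) F)
    (hsym : ∀ (σ : Equiv.Perm (Fin (n + 1))) (v : Fin (n + 1) → E), T (v ∘ σ) = T v)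
    (hP : ∀ a : E, AlmostSummingAt p (fun x => T fun _ => x) a) (a : E) :
    AlmostSummingAt p
      (fun x => ((n : ℝ) + 1) •
        T (Function.update (fun _ : Fin (n + 1) => a) (Fin.last n) x)) 0 := by
  classical
  obtain ⟨C, hC, ε, hε, r, hr, hbound⟩ := hP a
  obtain ⟨lam, hlam⟩ := lam_exists n
  set L : ℝ := ∑ m : Fin (n+2), |lam m| with hLdef
  have hL : 0 ≤ L := Finset.sum_nonneg fun m _ => abs_nonneg _
  have hprod : 0 ≤ L * C * ((n:ℝ)+1) ^ r :=
    mul_nonneg (mul_nonneg hL hC.le) (pow_nonneg (by positivity : (0:ℝ) ≤ (n:ℝ)+1) r)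
  have hn2 : (0:ℝ) < (n:ℝ) + 2 := by positivity
  refine ⟨L * C * ((n:ℝ)+1) ^ r + 1, by linarith, ε / ((n:ℝ)+2), div_pos hε hn2, r, hr, ?_⟩
  intro k x hx
  have hp0 : (0:ℝ) < p := lt_of_lt_of_le one_pos hp
  have hW : 0 ≤ weakNorm p x := weakNorm_nonneg hp0 x
  have hrw : (fun j => (fun z => ((n : ℝ) + 1) •
        T (Function.update (fun _ : Fin (n + 1) => a) (Fin.last n) z)) (0 + x j)
      - (fun z => ((n : ℝ) + 1) •
        T (Function.update (fun _ : Fin (n + 1) => a) (Fin.last n) z)) 0)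
      = fun j => ∑ m : Fin (n+2),
          lam m • (T (fun _ => a + (m:ℝ) • x j) - T (fun _ => a)) := by
    funext j
    rw [key_identity T hsym lam hlam a (x j)]
    have hz : T (Function.update (fun _ : Fin (n+1) => a) (Fin.last n) 0) = 0 :=
      T.map_coord_zero (Fin.last n) (by simp)
    simp [zero_add, hz]
  rw [hrw]
  have hterm : ∀ m : Fin (n+2),
      radNorm (fun j => T (fun _ => a + (m:ℝ) • x j) - T (fun _ => a))
        ≤ C * (((n:ℝ)+1) * weakNorm p x) ^ r := by
    intro m
    have hmlt : (m:ℕ) < n + 2 := m.isLt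
    have hm1 : ((m:ℕ):ℝ) ≤ (n:ℝ) + 1 := by
      have h5 : (m:ℕ) ≤ n + 1 := by omega
      exact_mod_cast h5
    have hm0 : (0:ℝ) ≤ ((m:ℕ):ℝ) := Nat.cast_nonneg _
    have hsm : weakNorm p (fun j => ((m:ℕ):ℝ) • x j) ≤ ((m:ℕ):ℝ) * weakNorm p x :=
      weakNorm_smul_le hp0 hm0 x
    have hWm : 0 ≤ weakNorm p (fun j => ((m:ℕ):ℝ) • x j) := weakNorm_nonneg hp0 _
    have hlt : weakNorm p (fun j => ((m:ℕ):ℝ) • x j) < ε := by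
      have h1 : ((m:ℕ):ℝ) * weakNorm p x ≤ ((n:ℝ)+2) * weakNorm p x :=
        mul_le_mul_of_nonneg_right (by push_cast; linarith) hW
      have h2 : ((n:ℝ)+2) * weakNorm p x < ((n:ℝ)+2) * (ε / ((n:ℝ)+2)) :=
        mul_lt_mul_of_pos_left hx hn2
      have h3 : ((n:ℝ)+2) * (ε / ((n:ℝ)+2)) = ε := by field_simp
      linarith
    have hb := hbound k (fun j => ((m:ℕ):ℝ) • x j) hlt
    simp only [smul_eq_mul] at hb ⊢
    refine hb.trans ?_
    apply mul_le_mul_of_nonneg_left _ hC.le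
    apply pow_le_pow_left₀ hWm _ r
    calc weakNorm p (fun j => ((m:ℕ):ℝ) • x j) ≤ ((m:ℕ):ℝ) * weakNorm p x := hsm
      _ ≤ ((n:ℝ)+1) * weakNorm p x := mul_le_mul_of_nonneg_right hm1 hW
  calc radNorm (fun j => ∑ m : Fin (n+2),
        lam m • (T (fun _ => a + (m:ℝ) • x j) - T (fun _ => a)))
      ≤ ∑ m : Fin (n+2), radNorm
          (fun j => lam m • (T (fun _ => a + (m:ℝ) • x j) - T (fun _ => a))) :=
        radNorm_sum_le Finset.univ
          (fun m j => lam m • (T (fun _ => a + (m:ℝ) • x j) - T (fun _ => a)))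
    _ ≤ ∑ m : Fin (n+2), |lam m| * (C * (((n:ℝ)+1) * weakNorm p x) ^ r) := by
        apply Finset.sum_le_sum
        intro m _
        refine (radNorm_smul_le _ _).trans ?_
        exact mul_le_mul_of_nonneg_left (hterm m) (abs_nonneg _)
    _ = L * (C * (((n:ℝ)+1) * weakNorm p x) ^ r) := by rw [← Finset.sum_mul]
    _ = L * C * (((n:ℝ)+1) ^ r * weakNorm p x ^ r) := by
        rw [mul_pow]; ring
    _ ≤ (L * C * ((n:ℝ)+1) ^ r + 1) * weakNorm p x ^ r := by
        nlinarith [pow_nonneg hW r]
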